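/- Suppose E ⊆ ℕ × ℕ and χ_E(i,j) = ⟨x_i, y_j⟩ for families of vectors in a Hilbert space with ‖x_i‖·‖y_j‖ < 2/√3 for all i, j. Then E has the 3 of 4 property: whenever i₁ ≠ i₂, j₁ ≠ j₂ and three of the four values ⟨x_{i_a}, y_{j_b}⟩ equal 1, the fourth equals 1 as well. -/

import Mathlib

/-- The "3 of 4 property". -/
def ThreeOfFour {X Y : Type*} (E : Set (X × Y)) : Prop :=
  ∀ ⦃x₁ x₂ : X⦄ ⦃y₁ y₂ : Y⦄, x₁ ≠ x₂ → y₁ ≠ y₂ →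
    (((x₁, y₁) ∈ E ∧ (x₁, y₂) ∈ E ∧ (x₂, y₁) ∈ E) → (x₂, y₂) ∈ E) ∧
    (((x₁, y₁) ∈ E ∧ (x₁, y₂) ∈ E ∧ (x₂, y₂) ∈ E) → (x₂, y₁) ∈ E) ∧
    (((x₁, y₁) ∈ E ∧ (x₂, y₁) ∈ E ∧ (x₂, y₂) ∈ E) → (x₁, y₂) ∈ E) ∧
    (((x₁, y₂) ∈ E ∧ (x₂, y₁) ∈ E ∧ (x₂, y₂) ∈ E) → (x₁, y₁) ∈ E)

open Classical in
/-- The characteristic function `χ_E` of a set `E ⊆ ℕ × ℕ`. -/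
noncomputable def chi (E : Set (ℕ × ℕ)) (i j : ℕ) : ℂ := if (i, j) ∈ E then 1 else 0

lemma core_contradiction {K : Type*} [NormedAddCommGroup K] [InnerProductSpace ℂ K]
    (u1 u2 v1 v2 : K)
    (h11 : (inner ℂ u1 v1 : ℂ) = 1) (h12 : (inner ℂ u1 v2 : ℂ) = 1)
    (h21 : (inner ℂ u2 v1 : ℂ) = 1) (h22 : (inner ℂ u2 v2 : ℂ) = 0)
    (b11 : ‖u1‖ * ‖v1‖ < 2 / Real.sqrt 3) (b12 : ‖u1‖ * ‖v2‖ < 2 / Real.sqrt 3)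
    (b21 : ‖u2‖ * ‖v1‖ < 2 / Real.sqrt 3) (b22 : ‖u2‖ * ‖v2‖ < 2 / Real.sqrt 3) :
    False := by
  have hsq : (2 / Real.sqrt 3) * (2 / Real.sqrt 3) = 4 / 3 := by
    rw [div_mul_div_comm, Real.mul_self_sqrt (by norm_num)]
    norm_num
  -- squared bounds
  have sq_bound : ∀ u v : K, ‖u‖ * ‖v‖ < 2 / Real.sqrt 3 → ‖u‖ ^ 2 * ‖v‖ ^ 2 < 4 / 3 := by
    intro u v h
    have h0 : (0:ℝ) ≤ ‖u‖ * ‖v‖ := by positivity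
    have h2 := mul_self_lt_mul_self h0 h
    rw [hsq] at h2
    calc ‖u‖ ^ 2 * ‖v‖ ^ 2 = (‖u‖ * ‖v‖) * (‖u‖ * ‖v‖) := by ring
      _ < 4 / 3 := h2
  have hac := sq_bound u1 v1 b11
  have had := sq_bound u1 v2 b12
  have hbc := sq_bound u2 v1 b21
  have hbd := sq_bound u2 v2 b22
  -- v1, v2 are nonzero
  have hv1 : v1 ≠ 0 := by
    intro h; rw [h, inner_zero_right] at h11; exact one_ne_zero h11.symm
  have hv2 : v2 ≠ 0 := by
    intro h; rw [h, inner_zero_right] at h12; exact one_ne_zero h12.symm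
  have hc : (0:ℝ) < ‖v1‖ ^ 2 := by
    have := norm_pos_iff.mpr hv1; positivity
  have hd : (0:ℝ) < ‖v2‖ ^ 2 := by
    have := norm_pos_iff.mpr hv2; positivity
  set a := ‖u1‖ ^ 2 with ha_def
  set b := ‖u2‖ ^ 2 with hb_def
  set c := ‖v1‖ ^ 2 with hc_def
  set d := ‖v2‖ ^ 2 with hd_def
  set P := RCLike.re (inner ℂ u1 u2 : ℂ) with hP_def
  -- Cauchy-Schwarz 1 : |⟨u1+u2, v1⟩| ≤ ‖u1+u2‖‖v1‖, with ⟨u1+u2,v1⟩ = 2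
  have cs1 : (2:ℝ) ≤ ‖u1 + u2‖ * ‖v1‖ := by
    have h := norm_inner_le_norm (𝕜 := ℂ) (u1 + u2) v1
    rw [inner_add_left, h11, h21] at h
    norm_num at h
    exact h
  have exp1 : ‖u1 + u2‖ ^ 2 = a + 2 * P + b := by
    rw [@norm_add_sq ℂ]
  have key1 : 4 ≤ (a + 2 * P + b) * c := by
    have h4 : (2:ℝ) ^ 2 ≤ (‖u1 + u2‖ * ‖v1‖) ^ 2 := by
      exact pow_le_pow_left₀ (by norm_num) cs1 2
    rw [mul_pow, exp1] at h4
    norm_num at h4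
    exact h4
  -- Cauchy-Schwarz 2 : |⟨u1 - (1/2)u2, v2⟩| ≤ ‖u1 - (1/2)u2‖‖v2‖, inner = 1
  have cs2 : (1:ℝ) ≤ ‖u1 - (1/2 : ℂ) • u2‖ * ‖v2‖ := by
    have h := norm_inner_le_norm (𝕜 := ℂ) (u1 - (1/2 : ℂ) • u2) v2
    rw [inner_sub_left, inner_smul_left, h12, h22] at h
    norm_num at h
    exact h
  have exp2 : ‖u1 - (1/2 : ℂ) • u2‖ ^ 2 = a - P + b / 4 := by
    rw [@norm_sub_sq ℂ, inner_smul_right, norm_smul]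
    have h5 : RCLike.re ((1/2 : ℂ) * (inner ℂ u1 u2 : ℂ)) = (1/2) * P := by
      simp [hP_def, Complex.mul_re, RCLike.re_to_complex]
    rw [h5]
    have h6 : ‖(1/2 : ℂ)‖ = 1/2 := by norm_num
    rw [h6, mul_pow]
    ring
  have key2 : 1 ≤ (a - P + b / 4) * d := by
    have h4 : (1:ℝ) ^ 2 ≤ (‖u1 - (1/2 : ℂ) • u2‖ * ‖v2‖) ^ 2 := by
      exact pow_le_pow_left₀ (by norm_num) cs2 2
    rw [mul_pow, exp2] at h4
    norm_num at h4
    exact h4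
  -- final contradiction
  have m1 : a * c * d < 4 / 3 * d := mul_lt_mul_of_pos_right hac hd
  have m2 : b * c * d < 4 / 3 * d := mul_lt_mul_of_pos_right hbc hd
  have m3 : a * d * c < 4 / 3 * c := mul_lt_mul_of_pos_right had hc
  have m4 : b * d * c < 4 / 3 * c := mul_lt_mul_of_pos_right hbd hc
  have k1 : 4 * d ≤ ((a + 2 * P + b) * c) * d := mul_le_mul_of_nonneg_right key1 hd.le
  have k2 : 1 * (2 * c) ≤ ((a - P + b / 4) * d) * (2 * c) :=
    mul_le_mul_of_nonneg_right key2 (by positivity)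
  nlinarith [k1, k2, m1, m2, m3, m4]

/-- If `χ_E(i,j) = ⟨x_i, y_j⟩` with `‖x_i‖·‖y_j‖ < 2/√3` for all `i, j`, then `E` has
the 3 of 4 property. -/
theorem gram_factorization_three_of_four {K : Type*} [NormedAddCommGroup K]
    [InnerProductSpace ℂ K] (E : Set (ℕ × ℕ)) (x y : ℕ → K)
    (hfact : ∀ i j, (inner ℂ (x i) (y j) : ℂ) = chi E i j)
    (hbound : ∀ i j, ‖x i‖ * ‖y j‖ < 2 / Real.sqrt 3) :
    ThreeOfFour E := by
  have one_of : ∀ i j, (i, j) ∈ E → (inner ℂ (x i) (y j) : ℂ) = 1 := by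
    intro i j h; rw [hfact, chi, if_pos h]
  have zero_of : ∀ i j, (i, j) ∉ E → (inner ℂ (x i) (y j) : ℂ) = 0 := by
    intro i j h; rw [hfact, chi, if_neg h]
  intro x₁ x₂ y₁ y₂ _ _
  refine ⟨?_, ?_, ?_, ?_⟩
  · rintro ⟨hA, hB, hC⟩
    by_contra hD
    exact core_contradiction (x x₁) (x x₂) (y y₁) (y y₂)
      (one_of _ _ hA) (one_of _ _ hB) (one_of _ _ hC) (zero_of _ _ hD)
      (hbound _ _) (hbound _ _) (hbound _ _) (hbound _ _)
  · rintro ⟨hA, hB, hC⟩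
    by_contra hD
    exact core_contradiction (x x₁) (x x₂) (y y₂) (y y₁)
      (one_of _ _ hB) (one_of _ _ hA) (one_of _ _ hC) (zero_of _ _ hD)
      (hbound _ _) (hbound _ _) (hbound _ _) (hbound _ _)
  · rintro ⟨hA, hB, hC⟩
    by_contra hD
    exact core_contradiction (x x₂) (x x₁) (y y₁) (y y₂)
      (one_of _ _ hB) (one_of _ _ hC) (one_of _ _ hA) (zero_of _ _ hD)
      (hbound _ _) (hbound _ _) (hbound _ _) (hbound _ _)
  · rintro ⟨hA, hB, hC⟩
    by_contra hD
    exact core_contradiction (x x₂) (x x₁) (y y₂) (y y₁)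
      (one_of _ _ hC) (one_of _ _ hB) (one_of _ _ hA) (zero_of _ _ hD)
      (hbound _ _) (hbound _ _) (hbound _ _) (hbound _ _)
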